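/- Let ℏ > 0 and for each α ∈ ℝ define the transformation T_α on pairs (a,b) of positive reals (a = Δx², b = Δp²) by T_α(a,b) = ( e^{−α}·a , e^{−α}·b + (ℏ²/4)·(e^{α} − e^{−α})/a ). Then for all a, b > 0 and α, β ∈ ℝ: (i) writing (a',b') = T_α(a,b), one has a'·b' = e^{−2α}·a·b + (ℏ²/4)·(1 − e^{−2α}); (ii) if a·b ≥ ℏ²/4 then a'·b' ≥ ℏ²/4; and (iii) T_α(T_β(a,b)) = T_{α+β}(a,b), so the transformations form a one-parameter group. -/

import Mathlib

/-- Transformation laws (7.1)–(7.2) of the paper: the dilatation transformations on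
`(Δx², Δp²)` satisfy the product law, preserve the Heisenberg relation `Δx²·Δp² ≥ ℏ²/4`,
and form a one-parameter group. -/
theorem uncertainty_dilatation_group
    (ℏ : ℝ) (hℏ : 0 < ℏ)
    (T : ℝ → ℝ × ℝ → ℝ × ℝ)
    (hT : ∀ (α : ℝ) (a b : ℝ),
      T α (a, b)
        = (Real.exp (-α) * a,
           Real.exp (-α) * b + (ℏ ^ 2 / 4) * (Real.exp α - Real.exp (-α)) / a)) :
    ∀ a b : ℝ, 0 < a → 0 < b → ∀ α β : ℝ,
      ((T α (a, b)).1 * (T α (a, b)).2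
        = Real.exp (-(2 * α)) * (a * b) + (ℏ ^ 2 / 4) * (1 - Real.exp (-(2 * α))))
      ∧ (ℏ ^ 2 / 4 ≤ a * b → ℏ ^ 2 / 4 ≤ (T α (a, b)).1 * (T α (a, b)).2)
      ∧ (T α (T β (a, b)) = T (α + β) (a, b)) := by
  intro a b ha hb α β
  have ha' : a ≠ 0 := ne_of_gt ha
  have key : ∀ γ : ℝ, (T γ (a, b)).1 * (T γ (a, b)).2
      = Real.exp (-(2 * γ)) * (a * b) + (ℏ ^ 2 / 4) * (1 - Real.exp (-(2 * γ))) := by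
    intro γ
    rw [hT]
    have h1 : Real.exp (-γ) * Real.exp (-γ) = Real.exp (-(2 * γ)) := by
      rw [← Real.exp_add]; ring_nf
    have h2 : Real.exp (-γ) * Real.exp γ = 1 := by
      rw [← Real.exp_add]; simp
    field_simp
    linear_combination (4*a*b - ℏ^2) * ((by rw [← Real.exp_add]; ring_nf : Real.exp (-γ) * Real.exp (-γ) = Real.exp (-(γ*2)))) + ℏ^2 * h2
  refine ⟨key α, ?_, ?_⟩
  · intro hab
    rw [key α]
    have he : 0 < Real.exp (-(2 * α)) := Real.exp_pos _
    nlinarith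
  · rw [hT β a b]
    rw [hT α, hT (α + β)]
    have heb : Real.exp (-β) ≠ 0 := Real.exp_ne_zero _
    have e1 : Real.exp (-α) * Real.exp (-β) = Real.exp (-(α + β)) := by
      rw [← Real.exp_add]; ring_nf
    have e2 : Real.exp (-β) * Real.exp β = 1 := by
      rw [← Real.exp_add]; simp
    have e3 : Real.exp α * Real.exp (-β) = Real.exp (α - β) := by
      rw [← Real.exp_add]; ring_nf
    have e4 : Real.exp (α + β) = Real.exp (α - β) * Real.exp β * Real.exp β := by
      rw [← Real.exp_add, ← Real.exp_add]; ring_nf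
    simp only [Prod.mk.injEq]
    constructor
    · rw [← mul_assoc, e1]
    · have r1 : Real.exp (-(α + β)) = Real.exp (-α) * Real.exp (-β) := e1.symm
      have r2 : Real.exp (α + β) = Real.exp (α - β) * Real.exp β * Real.exp β := e4
      have r3 : Real.exp α = Real.exp (α - β) * Real.exp β := by
        rw [← Real.exp_add]; ring_nf
      rw [r1, r2, r3]
      field_simp
      linear_combination (ℏ ^ 2 * (Real.exp (-α) - Real.exp (α - β) * Real.exp β)) * e2
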